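/- Let A be an n×n nonnegative real matrix with r(A) > 0. Then A has Property 1 if and only if both A and AᵀA are irreducible. -/

import Mathlib

open Matrix

/-- Spectral radius of a real square matrix: the maximum modulus of its complex
eigenvalues. -/
noncomputable def specRad {n : ℕ} (A : Matrix (Fin n) (Fin n) ℝ) : ℝ :=
  sSup {x : ℝ | ∃ μ ∈ spectrum ℂ (A.map Complex.ofReal), x = ‖μ‖}

/-- A nonnegative matrix is irreducible if for every pair (i,j) some power has a
positive (i,j) entry. -/
def MatIrred {n : ℕ} (A : Matrix (Fin n) (Fin n) ℝ) : Prop :=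
  ∀ i j : Fin n, ∃ m : ℕ, 0 < m ∧ 0 < (A ^ m) i j

/-- For a real diagonal matrix D = diag d, `expDiag d` is diag (exp d). -/
noncomputable def expDiag {n : ℕ} (d : Fin n → ℝ) : Matrix (Fin n) (Fin n) ℝ :=
  Matrix.diagonal fun i => Real.exp (d i)

/-- Property 1: equality in the log-convexity inequality forces C - D to be scalar. -/
def Property1 {n : ℕ} (A : Matrix (Fin n) (Fin n) ℝ) : Prop :=
  ∀ C D : Fin n → ℝ, ∀ t ∈ Set.Ioo (0:ℝ) 1,
    Real.log (specRad (expDiag (fun i => (1 - t) * C i + t * D i) * A)) =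
      (1 - t) * Real.log (specRad (expDiag C * A)) +
        t * Real.log (specRad (expDiag D * A)) →
    ∃ c : ℝ, ∀ i, C i - D i = c


namespace PFAux

variable {n : ℕ}

def lamSet (M : Matrix (Fin n) (Fin n) ℝ) : Set ℝ :=
  {l | 0 ≤ l ∧ ∃ x ∈ stdSimplex ℝ (Fin n), ∀ i, l * x i ≤ M.mulVec x i}

noncomputable def lam (M : Matrix (Fin n) (Fin n) ℝ) : ℝ := sSup (lamSet M)

lemma mulVec_apply {M : Matrix (Fin n) (Fin n) ℝ} {x : Fin n → ℝ} {i : Fin n} :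
    M.mulVec x i = ∑ j, M i j * x j := rfl

lemma pow_entry_nonneg {M : Matrix (Fin n) (Fin n) ℝ} (hM : ∀ i j, 0 ≤ M i j) (m : ℕ) :
    ∀ i j, 0 ≤ (M ^ m) i j := by
  induction m with
  | zero =>
    intro i j
    by_cases h : i = j <;> simp [pow_zero, Matrix.one_apply, h]
  | succ k ih =>
    intro i j
    rw [pow_succ, Matrix.mul_apply]
    exact Finset.sum_nonneg fun l _ => mul_nonneg (ih i l) (hM l j)

lemma mulVec_entry_nonneg {M : Matrix (Fin n) (Fin n) ℝ} (hM : ∀ i j, 0 ≤ M i j)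
    {x : Fin n → ℝ} (hx : ∀ j, 0 ≤ x j) (i : Fin n) : 0 ≤ M.mulVec x i := by
  rw [mulVec_apply]
  exact Finset.sum_nonneg fun j _ => mul_nonneg (hM i j) (hx j)

lemma uniform_mem_simplex (hn : 0 < n) :
    (fun _ : Fin n => (n : ℝ)⁻¹) ∈ stdSimplex ℝ (Fin n) := by
  constructor
  · intro i; positivity
  · simp [Finset.sum_const, Finset.card_univ]
    field_simp

lemma zero_mem_lamSet {M : Matrix (Fin n) (Fin n) ℝ} (hn : 0 < n) (hM : ∀ i j, 0 ≤ M i j) :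
    (0 : ℝ) ∈ lamSet M := by
  refine ⟨le_refl 0, fun _ => (n : ℝ)⁻¹, uniform_mem_simplex hn, fun i => ?_⟩
  rw [zero_mul]
  exact mulVec_entry_nonneg hM (fun _ => by positivity) i

lemma lamSet_nonempty {M : Matrix (Fin n) (Fin n) ℝ} (hn : 0 < n) (hM : ∀ i j, 0 ≤ M i j) :
    (lamSet M).Nonempty := ⟨0, zero_mem_lamSet hn hM⟩

lemma simplex_coord_le_one {x : Fin n → ℝ} (hx : x ∈ stdSimplex ℝ (Fin n)) (j : Fin n) :
    x j ≤ 1 := by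
  rcases hx with ⟨h0, h1⟩
  calc x j ≤ ∑ i, x i := Finset.single_le_sum (fun i _ => h0 i) (Finset.mem_univ j)
  _ = 1 := h1

lemma simplex_exists_pos {x : Fin n → ℝ} (hx : x ∈ stdSimplex ℝ (Fin n)) :
    ∃ j, 0 < x j := by
  by_contra h
  push_neg at h
  have : ∑ i, x i = 0 := Finset.sum_eq_zero fun i _ => le_antisymm (h i) (hx.1 i)
  rw [hx.2] at this; norm_num at this

lemma lamSet_le_bound {M : Matrix (Fin n) (Fin n) ℝ} (hM : ∀ i j, 0 ≤ M i j)
    {l : ℝ} (hl : l ∈ lamSet M) : l ≤ n * (∑ i, ∑ j, M i j) := by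
  obtain ⟨hl0, x, hx, hfeas⟩ := hl
  obtain ⟨i, _, hi⟩ := Finset.exists_max_image Finset.univ x ⟨⟨0, by
    rcases Nat.eq_zero_or_pos n with h | h
    · exfalso; obtain ⟨j, _⟩ := simplex_exists_pos hx; exact absurd j.2 (by omega)
    · exact h⟩, Finset.mem_univ _⟩
  have hxi : (n : ℝ)⁻¹ * 1 ≤ x i := by
    have h1 : (1 : ℝ) = ∑ j, x j := hx.2.symm
    have h2 : ∑ j, x j ≤ ∑ _j : Fin n, x i :=
      Finset.sum_le_sum fun j _ => hi j (Finset.mem_univ j)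
    have hn' : 0 < n := by
      rcases Nat.eq_zero_or_pos n with h | h
      · exact absurd i.2 (by omega)
      · exact h
    rw [Finset.sum_const, Finset.card_univ, Fintype.card_fin, nsmul_eq_mul] at h2
    rw [mul_one, inv_le_iff_one_le_mul₀ (by exact_mod_cast hn')]
    rw [mul_comm]
    linarith [h1 ▸ h2]
  have hbd : M.mulVec x i ≤ ∑ i', ∑ j, M i' j := by
    calc M.mulVec x i = ∑ j, M i j * x j := mulVec_apply
    _ ≤ ∑ j, M i j := Finset.sum_le_sum fun j _ =>
        mul_le_of_le_one_right (hM i j) (simplex_coord_le_one hx j)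
    _ ≤ ∑ i', ∑ j, M i' j := Finset.single_le_sum
        (f := fun i' => ∑ j, M i' j)
        (fun i' _ => Finset.sum_nonneg fun j _ => hM i' j) (Finset.mem_univ i)
  have := hfeas i
  have h3 : l * ((n:ℝ)⁻¹ * 1) ≤ l * x i := by
    apply mul_le_mul_of_nonneg_left hxi hl0
  have h4 : l * (n:ℝ)⁻¹ ≤ ∑ i', ∑ j, M i' j := by
    rw [mul_one] at h3; linarith
  have hn' : (0:ℝ) < n := by
    have : 0 < n := by
      rcases Nat.eq_zero_or_pos n with h | h
      · exact absurd i.2 (by omega)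
      · exact h
    exact_mod_cast this
  calc l = n * (l * (n:ℝ)⁻¹) := by field_simp
  _ ≤ n * (∑ i', ∑ j, M i' j) := by
      apply mul_le_mul_of_nonneg_left h4 (le_of_lt hn')

lemma lamSet_bddAbove {M : Matrix (Fin n) (Fin n) ℝ} (hM : ∀ i j, 0 ≤ M i j) :
    BddAbove (lamSet M) := ⟨_, fun _ hl => lamSet_le_bound hM hl⟩

lemma lam_nonneg {M : Matrix (Fin n) (Fin n) ℝ} (hn : 0 < n) (hM : ∀ i j, 0 ≤ M i j) :
    0 ≤ lam M := le_csSup (lamSet_bddAbove hM) (zero_mem_lamSet hn hM)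

lemma le_lam {M : Matrix (Fin n) (Fin n) ℝ} (hM : ∀ i j, 0 ≤ M i j)
    {l : ℝ} (hl : l ∈ lamSet M) : l ≤ lam M := le_csSup (lamSet_bddAbove hM) hl


lemma mulVec_applyC {α : Type*} [NonUnitalNonAssocSemiring α] {M : Matrix (Fin n) (Fin n) α}
    {x : Fin n → α} {i : Fin n} : M.mulVec x i = ∑ j, M i j * x j := rfl

lemma mem_spectrum_of_eigen {X : Matrix (Fin n) (Fin n) ℂ} {z : Fin n → ℂ} {μ : ℂ}
    (hz : z ≠ 0) (h : X.mulVec z = μ • z) : μ ∈ spectrum ℂ X := by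
  rw [spectrum.mem_iff, Matrix.isUnit_iff_isUnit_det, isUnit_iff_ne_zero, not_not,
    ← Matrix.exists_mulVec_eq_zero_iff]
  refine ⟨z, hz, ?_⟩
  rw [Algebra.algebraMap_eq_smul_one, Matrix.sub_mulVec, Matrix.smul_mulVec,
    Matrix.one_mulVec, h, sub_self]

lemma eigen_of_mem_spectrum {X : Matrix (Fin n) (Fin n) ℂ} {μ : ℂ}
    (h : μ ∈ spectrum ℂ X) : ∃ z, z ≠ 0 ∧ X.mulVec z = μ • z := by
  rw [spectrum.mem_iff, Matrix.isUnit_iff_isUnit_det, isUnit_iff_ne_zero, not_not,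
    ← Matrix.exists_mulVec_eq_zero_iff] at h
  obtain ⟨z, hz, hz2⟩ := h
  refine ⟨z, hz, ?_⟩
  rw [Algebra.algebraMap_eq_smul_one, Matrix.sub_mulVec, Matrix.smul_mulVec,
    Matrix.one_mulVec, sub_eq_zero] at hz2
  exact hz2.symm

lemma spectrum_nonempty (hn : 0 < n) (X : Matrix (Fin n) (Fin n) ℂ) :
    (spectrum ℂ X).Nonempty := by
  haveI : Nontrivial (Fin n → ℂ) := by
    haveI : Nonempty (Fin n) := ⟨⟨0, hn⟩⟩
    infer_instance
  obtain ⟨μ, hμ⟩ := Module.End.exists_eigenvalue (Matrix.mulVecLin X)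
  obtain ⟨v, hv⟩ := hμ.exists_hasEigenvector
  refine ⟨μ, mem_spectrum_of_eigen hv.right ?_⟩
  have := hv.apply_eq_smul
  rwa [Matrix.mulVecLin_apply] at this

lemma abs_mem_lamSet {M : Matrix (Fin n) (Fin n) ℝ} (hM : ∀ i j, 0 ≤ M i j) {μ : ℂ}
    (h : μ ∈ spectrum ℂ (M.map Complex.ofReal)) : ‖μ‖ ∈ lamSet M := by
  obtain ⟨z, hz, heig⟩ := eigen_of_mem_spectrum h
  set a : Fin n → ℝ := fun i => ‖z i‖ with ha
  have haNN : ∀ i, 0 ≤ a i := fun i => norm_nonneg _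
  have hkey : ∀ i, ‖μ‖ * a i ≤ M.mulVec a i := by
    intro i
    have h1 : ‖μ‖ * a i = ‖μ * z i‖ := by
      rw [norm_mul]
    have h2 : μ * z i = (M.map Complex.ofReal).mulVec z i := by
      rw [heig]; rfl
    rw [h1, h2, mulVec_applyC]
    calc ‖∑ j, (M.map Complex.ofReal) i j * z j‖
        ≤ ∑ j, ‖(M.map Complex.ofReal) i j * z j‖ :=
          norm_sum_le _ _
      _ = ∑ j, M i j * a j := by
          apply Finset.sum_congr rfl
          intro j _
          rw [norm_mul]
          congr 1
          simp [Matrix.map_apply, Complex.norm_real, Real.norm_eq_abs, abs_of_nonneg (hM i j)]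
      _ = M.mulVec a i := mulVec_apply.symm
  have hS : 0 < ∑ i, a i := by
    have : ∃ i, z i ≠ 0 := by
      by_contra hcon; push_neg at hcon; exact hz (funext hcon)
    obtain ⟨i0, hi0⟩ := this
    have : 0 < a i0 := by
      simp only [ha]; exact norm_pos_iff.mpr hi0
    calc (0:ℝ) < a i0 := this
    _ ≤ ∑ i, a i := Finset.single_le_sum (fun i _ => haNN i) (Finset.mem_univ i0)
  refine ⟨norm_nonneg μ, fun i => (∑ k, a k)⁻¹ * a i, ⟨fun i => by positivity, ?_⟩, ?_⟩
  · rw [← Finset.mul_sum]; field_simp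
  · intro i
    have h2 : M.mulVec (fun i => (∑ k, a k)⁻¹ * a i) i = (∑ k, a k)⁻¹ * M.mulVec a i := by
      rw [mulVec_apply, mulVec_apply, Finset.mul_sum]
      apply Finset.sum_congr rfl; intro j _; ring
    rw [h2]
    have := mul_le_mul_of_nonneg_left (hkey i) (le_of_lt (inv_pos.mpr hS))
    calc ‖μ‖ * ((∑ k, a k)⁻¹ * a i) = (∑ k, a k)⁻¹ * (‖μ‖ * a i) := by ring
    _ ≤ (∑ k, a k)⁻¹ * M.mulVec a i := this

lemma specRad_le_lam {M : Matrix (Fin n) (Fin n) ℝ} (hn : 0 < n) (hM : ∀ i j, 0 ≤ M i j) :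
    specRad M ≤ lam M := by
  apply csSup_le
  · obtain ⟨μ, hμ⟩ := spectrum_nonempty hn (M.map Complex.ofReal)
    exact ⟨‖μ‖, μ, hμ, rfl⟩
  · rintro x ⟨μ, hμ, rfl⟩
    exact le_lam hM (abs_mem_lamSet hM hμ)

lemma absSet_bddAbove {M : Matrix (Fin n) (Fin n) ℝ} (hM : ∀ i j, 0 ≤ M i j) :
    BddAbove {x : ℝ | ∃ μ ∈ spectrum ℂ (M.map Complex.ofReal), x = ‖μ‖} := by
  refine ⟨n * (∑ i, ∑ j, M i j), ?_⟩
  rintro x ⟨μ, hμ, rfl⟩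
  exact lamSet_le_bound hM (abs_mem_lamSet hM hμ)

lemma real_eigen_le_specRad {M : Matrix (Fin n) (Fin n) ℝ} (hM : ∀ i j, 0 ≤ M i j)
    {v : Fin n → ℝ} {l : ℝ} (hv : v ≠ 0) (heig : M.mulVec v = l • v) (hl : 0 ≤ l) :
    l ≤ specRad M := by
  have hz : (fun i => (v i : ℂ)) ≠ 0 := by
    intro hcon
    apply hv
    funext i
    have h0 : (v i : ℂ) = 0 := by simpa using congrFun hcon i
    exact_mod_cast h0
  have heigC : (M.map Complex.ofReal).mulVec (fun i => (v i : ℂ)) = (l : ℂ) • (fun i => (v i : ℂ)) := by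
    funext i
    have h1 := congrFun heig i
    rw [mulVec_apply, Pi.smul_apply, smul_eq_mul] at h1
    rw [mulVec_applyC]
    simp only [Pi.smul_apply, smul_eq_mul, Matrix.map_apply]
    exact_mod_cast h1
  have hmem : (l : ℂ) ∈ spectrum ℂ (M.map Complex.ofReal) := mem_spectrum_of_eigen hz heigC
  have : l = ‖(l : ℂ)‖ := by
    rw [Complex.norm_real, Real.norm_eq_abs, abs_of_nonneg hl]
  apply le_csSup (absSet_bddAbove hM)
  exact ⟨(l:ℂ), hmem, this⟩

lemma simplex_ne_zero {x : Fin n → ℝ} (hx : x ∈ stdSimplex ℝ (Fin n)) : x ≠ 0 := by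
  intro hcon
  have := hx.2
  rw [hcon] at this
  simp at this

lemma lamSet_isCompact {M : Matrix (Fin n) (Fin n) ℝ} (hM : ∀ i j, 0 ≤ M i j) :
    IsCompact (lamSet M) := by
  have himg : lamSet M = Prod.fst '' {p : ℝ × (Fin n → ℝ) |
      p.1 ∈ Set.Icc 0 ((n : ℝ) * (∑ i, ∑ j, M i j)) ∧ p.2 ∈ stdSimplex ℝ (Fin n) ∧
      ∀ i, p.1 * p.2 i ≤ M.mulVec p.2 i} := by
    ext l
    constructor
    · rintro ⟨hl0, x, hx, hf⟩
      exact ⟨(l, x), ⟨⟨hl0, lamSet_le_bound hM ⟨hl0, x, hx, hf⟩⟩, hx, hf⟩, rfl⟩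
    · rintro ⟨⟨l', x⟩, ⟨hIcc, hx, hf⟩, rfl⟩
      exact ⟨hIcc.1, x, hx, hf⟩
  rw [himg]
  apply IsCompact.image _ continuous_fst
  apply IsCompact.of_isClosed_subset ((isCompact_Icc).prod (isCompact_stdSimplex _ _))
  · rw [Set.setOf_and, Set.setOf_and]
    apply IsClosed.inter
    · exact (isClosed_Icc).preimage continuous_fst
    apply IsClosed.inter
    · exact (isClosed_stdSimplex _ _).preimage continuous_snd
    · have : {p : ℝ × (Fin n → ℝ) | ∀ i, p.1 * p.2 i ≤ M.mulVec p.2 i} =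
          ⋂ i, {p : ℝ × (Fin n → ℝ) | p.1 * p.2 i ≤ M.mulVec p.2 i} := by
        ext p; simp
      rw [this]
      apply isClosed_iInter
      intro i
      apply isClosed_le
      · exact continuous_fst.mul ((continuous_apply i).comp continuous_snd)
      · have : (fun p : ℝ × (Fin n → ℝ) => M.mulVec p.2 i)
            = fun p => ∑ j, M i j * p.2 j := by
          funext p; exact mulVec_apply
        rw [this]
        exact continuous_finset_sum _ fun j _ =>
          continuous_const.mul ((continuous_apply j).comp continuous_snd)
  · rintro p ⟨h1, h2, _⟩
    exact Set.mem_prod.mpr ⟨h1, h2⟩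

lemma matIrred_of_pos {M : Matrix (Fin n) (Fin n) ℝ} (h : ∀ i j, 0 < M i j) : MatIrred M :=
  fun i j => ⟨1, one_pos, by rw [pow_one]; exact h i j⟩

lemma exists_eigen_irred {M : Matrix (Fin n) (Fin n) ℝ} (hn : 0 < n)
    (hM : ∀ i j, 0 ≤ M i j) (hirr : MatIrred M) :
    ∃ v ∈ stdSimplex ℝ (Fin n), M.mulVec v = lam M • v := by
  haveI : Nonempty (Fin n) := ⟨⟨0, hn⟩⟩
  have hmem : lam M ∈ lamSet M :=
    (lamSet_isCompact hM).sSup_mem (lamSet_nonempty hn hM)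
  obtain ⟨hl0, x, hx, hf⟩ := hmem
  by_cases hy : M.mulVec x = lam M • x
  · exact ⟨x, hx, hy⟩
  exfalso
  set y : Fin n → ℝ := fun i => M.mulVec x i - lam M * x i with hydef
  have hy0 : ∀ i, 0 ≤ y i := fun i => sub_nonneg.mpr (hf i)
  have hyne : ∃ i0, 0 < y i0 := by
    by_contra hcon
    push_neg at hcon
    apply hy
    funext i
    have h0 : y i = 0 := le_antisymm (hcon i) (hy0 i)
    have : M.mulVec x i = lam M * x i := by
      have := sub_eq_zero.mp h0
      linarith [this]
    simpa [Pi.smul_apply, smul_eq_mul] using this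
  obtain ⟨i0, hi0⟩ := hyne
  -- positive matrix B = ∑_{k ≤ N} M^k
  choose f hf1 hf2 using fun p : Fin n × Fin n => hirr p.1 p.2
  set N := Finset.univ.sup f with hN
  set B := ∑ k ∈ Finset.range (N + 1), M ^ k with hB
  have hBapp : ∀ i j, B i j = ∑ k ∈ Finset.range (N + 1), (M ^ k) i j := by
    intro i j; rw [hB, Matrix.sum_apply]
  have hBnn : ∀ i j, 0 ≤ B i j := by
    intro i j; rw [hBapp]
    exact Finset.sum_nonneg fun k _ => pow_entry_nonneg hM k i j
  have hBpos : ∀ i j, 0 < B i j := by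
    intro i j
    have hmem' : f (i, j) ∈ Finset.range (N + 1) :=
      Finset.mem_range.mpr (Nat.lt_succ_of_le (Finset.le_sup (Finset.mem_univ (i, j))))
    have hle : (M ^ f (i, j)) i j ≤ B i j := by
      rw [hBapp]
      exact Finset.single_le_sum (fun k _ => pow_entry_nonneg hM k i j) hmem'
    exact lt_of_lt_of_le (hf2 (i, j)) hle
  set w := B.mulVec x with hw
  have hwpos : ∀ i, 0 < w i := by
    intro i
    obtain ⟨j0, hj0⟩ := simplex_exists_pos hx
    have : B i j0 * x j0 ≤ w i := by
      rw [hw, mulVec_apply]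
      exact Finset.single_le_sum (fun j _ => mul_nonneg (hBnn i j) (hx.1 j)) (Finset.mem_univ j0)
    exact lt_of_lt_of_le (mul_pos (hBpos i j0) hj0) this
  have hcomm : M * B = B * M := by
    rw [hB, Matrix.mul_sum, Matrix.sum_mul]
    apply Finset.sum_congr rfl
    intro k _
    rw [← pow_succ, ← pow_succ']
  have hMw : ∀ i, M.mulVec w i = lam M * w i + B.mulVec y i := by
    have h1 : M.mulVec w = B.mulVec (M.mulVec x) := by
      rw [hw, Matrix.mulVec_mulVec, Matrix.mulVec_mulVec, hcomm]
    have h2 : M.mulVec x = (fun i => lam M * x i) + y := by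
      funext i; simp [hydef]
    intro i
    rw [h1, h2, Matrix.mulVec_add]
    have h3 : B.mulVec (fun i => lam M * x i) = fun i => lam M * w i := by
      have : (fun i => lam M * x i) = lam M • x := by funext i; simp
      rw [this, Matrix.mulVec_smul, hw]
      funext i; simp
    simp [h3]
  have hBy : ∀ i, 0 < B.mulVec y i := by
    intro i
    have : B i i0 * y i0 ≤ B.mulVec y i := by
      rw [mulVec_apply]
      exact Finset.single_le_sum (fun j _ => mul_nonneg (hBnn i j) (hy0 j)) (Finset.mem_univ i0)
    exact lt_of_lt_of_le (mul_pos (hBpos i i0) hi0) this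
  set ε := Finset.univ.inf' Finset.univ_nonempty (fun i => B.mulVec y i / w i) with hε
  have hεpos : 0 < ε := by
    rw [hε, Finset.lt_inf'_iff]
    intro i _
    exact div_pos (hBy i) (hwpos i)
  have hεle : ∀ i, ε * w i ≤ B.mulVec y i := by
    intro i
    have h4 : ε ≤ B.mulVec y i / w i := Finset.inf'_le _ (Finset.mem_univ i)
    calc ε * w i ≤ (B.mulVec y i / w i) * w i :=
          mul_le_mul_of_nonneg_right h4 (le_of_lt (hwpos i))
    _ = B.mulVec y i := div_mul_cancel₀ _ (ne_of_gt (hwpos i))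
  set S := ∑ i, w i with hS
  have hSpos : 0 < S := Finset.sum_pos (fun i _ => hwpos i) Finset.univ_nonempty
  have hfeas : lam M + ε ∈ lamSet M := by
    refine ⟨by linarith, S⁻¹ • w, ⟨fun i => le_of_lt (by simpa [Pi.smul_apply, smul_eq_mul] using mul_pos (inv_pos.mpr hSpos) (hwpos i)), ?_⟩, ?_⟩
    · simp only [Pi.smul_apply, smul_eq_mul, ← Finset.mul_sum, ← hS]
      field_simp
    · intro i
      have h1 : M.mulVec (S⁻¹ • w) i = S⁻¹ * M.mulVec w i := by
        rw [Matrix.mulVec_smul]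
        simp
      rw [h1, Pi.smul_apply, smul_eq_mul]
      have h2 : (lam M + ε) * w i ≤ M.mulVec w i := by
        rw [hMw i]
        nlinarith [hεle i]
      calc (lam M + ε) * (S⁻¹ * w i) = S⁻¹ * ((lam M + ε) * w i) := by ring
      _ ≤ S⁻¹ * M.mulVec w i := mul_le_mul_of_nonneg_left h2 (by positivity)
  have hcontr := le_lam hM hfeas
  linarith

lemma lam_le_lam {M M' : Matrix (Fin n) (Fin n) ℝ} (hn : 0 < n)
    (hM : ∀ i j, 0 ≤ M i j) (hle : ∀ i j, M i j ≤ M' i j) : lam M ≤ lam M' := by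
  have hM' : ∀ i j, 0 ≤ M' i j := fun i j => le_trans (hM i j) (hle i j)
  apply csSup_le (lamSet_nonempty hn hM)
  intro l hl
  obtain ⟨hl0, x, hx, hf⟩ := hl
  apply le_lam hM'
  refine ⟨hl0, x, hx, fun i => le_trans (hf i) ?_⟩
  rw [mulVec_apply, mulVec_apply]
  exact Finset.sum_le_sum fun j _ => mul_le_mul_of_nonneg_right (hle i j) (hx.1 j)

lemma exists_eigen (hn : 0 < n) {M : Matrix (Fin n) (Fin n) ℝ} (hM : ∀ i j, 0 ≤ M i j) :
    ∃ l v, lam M ≤ l ∧ 0 ≤ l ∧ v ∈ stdSimplex ℝ (Fin n) ∧ M.mulVec v = l • v := by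
  haveI : Nonempty (Fin n) := ⟨⟨0, hn⟩⟩
  set Mk : ℕ → Matrix (Fin n) (Fin n) ℝ :=
    fun k => M + (1 / ((k : ℝ) + 1)) • Matrix.of (fun _ _ => (1 : ℝ)) with hMk
  have hkpos : ∀ k : ℕ, (0:ℝ) < 1 / ((k:ℝ) + 1) := fun k => by positivity
  have hMkapp : ∀ k i j, Mk k i j = M i j + 1 / ((k : ℝ) + 1) := by
    intro k i j; simp [hMk, Matrix.add_apply, Matrix.smul_apply]
  have hMkpos : ∀ k i j, 0 < Mk k i j := by
    intro k i j; rw [hMkapp]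
    have := hkpos k
    have := hM i j
    linarith
  have hMknn : ∀ k i j, 0 ≤ Mk k i j := fun k i j => le_of_lt (hMkpos k i j)
  choose v hv hveig using fun k =>
    exists_eigen_irred hn (hMknn k) (matIrred_of_pos (hMkpos k))
  set lk : ℕ → ℝ := fun k => lam (Mk k) with hlk
  have hmono : Antitone lk := by
    intro k k' hkk'
    apply lam_le_lam hn (hMknn k')
    intro i j
    rw [hMkapp, hMkapp]
    have h1 : 1 / ((k' : ℝ) + 1) ≤ 1 / ((k : ℝ) + 1) := by
      apply one_div_le_one_div_of_le (by positivity)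
      exact_mod_cast by omega
    linarith
  have hlow : ∀ k, lam M ≤ lk k := by
    intro k
    apply lam_le_lam hn hM
    intro i j
    rw [hMkapp]
    have := hkpos k
    linarith
  have hbdd : BddBelow (Set.range lk) := ⟨lam M, by rintro z ⟨k, rfl⟩; exact hlow k⟩
  have htl : Filter.Tendsto lk Filter.atTop (nhds (⨅ k, lk k)) :=
    tendsto_atTop_ciInf hmono hbdd
  obtain ⟨a, ha, φ, hφ, hconv⟩ := (isCompact_stdSimplex ℝ (Fin n)).tendsto_subseq hv
  set lhat := ⨅ k, lk k with hlhat
  refine ⟨lhat, a, ?_, ?_, ha, ?_⟩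
  · exact le_ciInf hlow
  · exact le_trans (lam_nonneg hn hM) (le_ciInf hlow)
  · funext i
    have hcoord : ∀ j, Filter.Tendsto (fun k => v (φ k) j) Filter.atTop (nhds (a j)) := by
      intro j
      exact (tendsto_pi_nhds.mp hconv) j
    have hLHS : Filter.Tendsto (fun k => (Mk (φ k)).mulVec (v (φ k)) i)
        Filter.atTop (nhds (M.mulVec a i)) := by
      have heq : ∀ k, (Mk (φ k)).mulVec (v (φ k)) i
          = M.mulVec (v (φ k)) i + 1 / ((φ k : ℝ) + 1) := by
        intro k
        rw [mulVec_apply, mulVec_apply]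
        have : ∀ j, Mk (φ k) i j * v (φ k) j
            = M i j * v (φ k) j + 1 / ((φ k : ℝ) + 1) * v (φ k) j := by
          intro j; rw [hMkapp]; ring
        rw [Finset.sum_congr rfl (fun j _ => this j), Finset.sum_add_distrib, ← Finset.mul_sum,
          (hv (φ k)).2, mul_one]
      rw [show (fun k => (Mk (φ k)).mulVec (v (φ k)) i)
          = fun k => M.mulVec (v (φ k)) i + 1 / ((φ k : ℝ) + 1) from funext heq]
      have h1 : Filter.Tendsto (fun k => M.mulVec (v (φ k)) i) Filter.atTop
          (nhds (M.mulVec a i)) := by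
        rw [show (fun k => M.mulVec (v (φ k)) i) = fun k => ∑ j, M i j * v (φ k) j from rfl]
        rw [show M.mulVec a i = ∑ j, M i j * a j from rfl]
        exact tendsto_finset_sum _ fun j _ => (hcoord j).const_mul (M i j)
      have h2 : Filter.Tendsto (fun k => 1 / ((φ k : ℝ) + 1)) Filter.atTop (nhds 0) := by
        have := tendsto_one_div_add_atTop_nhds_zero_nat (𝕜 := ℝ)
        exact this.comp hφ.tendsto_atTop
      simpa using h1.add h2
    have hRHS : Filter.Tendsto (fun k => (Mk (φ k)).mulVec (v (φ k)) i)
        Filter.atTop (nhds (lhat * a i)) := by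
      have heq : ∀ k, (Mk (φ k)).mulVec (v (φ k)) i = lk (φ k) * v (φ k) i := by
        intro k
        rw [hveig (φ k)]
        simp
        exact Or.inl rfl
      rw [show (fun k => (Mk (φ k)).mulVec (v (φ k)) i)
          = fun k => lk (φ k) * v (φ k) i from funext heq]
      exact (htl.comp hφ.tendsto_atTop).mul (hcoord i)
    have := tendsto_nhds_unique hLHS hRHS
    simpa using this

lemma specRad_eigen (hn : 0 < n) {M : Matrix (Fin n) (Fin n) ℝ} (hM : ∀ i j, 0 ≤ M i j) :
    specRad M = lam M ∧ ∃ v ∈ stdSimplex ℝ (Fin n), M.mulVec v = specRad M • v := by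
  obtain ⟨l, v, hle, hl0, hv, heig⟩ := exists_eigen hn hM
  have h1 : l ≤ specRad M := real_eigen_le_specRad hM (simplex_ne_zero hv) heig hl0
  have h2 : specRad M ≤ lam M := specRad_le_lam hn hM
  have h3 : specRad M = lam M := le_antisymm h2 (le_trans hle h1)
  have h4 : l = specRad M := le_antisymm h1 (le_trans (le_of_eq h3) hle)
  exact ⟨h3, v, hv, h4 ▸ heig⟩

lemma specRad_eq_lam (hn : 0 < n) {M : Matrix (Fin n) (Fin n) ℝ} (hM : ∀ i j, 0 ≤ M i j) :
    specRad M = lam M := (specRad_eigen hn hM).1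

lemma specRad_mono (hn : 0 < n) {M M' : Matrix (Fin n) (Fin n) ℝ}
    (hM : ∀ i j, 0 ≤ M i j) (hle : ∀ i j, M i j ≤ M' i j) : specRad M ≤ specRad M' := by
  have hM' : ∀ i j, 0 ≤ M' i j := fun i j => le_trans (hM i j) (hle i j)
  rw [specRad_eq_lam hn hM, specRad_eq_lam hn hM']
  exact lam_le_lam hn hM hle

lemma exists_pos_term {f : Fin n → ℝ} (h0 : ∀ j, 0 ≤ f j) (h : 0 < ∑ j, f j) :
    ∃ j, 0 < f j := by
  by_contra hcon
  push_neg at hcon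
  have hz : ∑ j, f j ≤ 0 := Finset.sum_nonpos fun j _ => hcon j
  linarith

lemma row_nonzero {M : Matrix (Fin n) (Fin n) ℝ} (hM : ∀ i j, 0 ≤ M i j)
    (hirr : MatIrred M) (i : Fin n) : ∃ j, 0 < M i j := by
  obtain ⟨m, hm, hpos⟩ := hirr i i
  obtain ⟨k, rfl⟩ : ∃ k, m = k + 1 := ⟨m - 1, by omega⟩
  rw [pow_succ', Matrix.mul_apply] at hpos
  obtain ⟨j, hj⟩ := exists_pos_term (fun j => mul_nonneg (hM i j) (pow_entry_nonneg hM k j i)) hpos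
  exact ⟨j, (mul_pos_iff.mp hj).elim (fun h => h.1) (fun h => absurd h.2 (not_lt.mpr (pow_entry_nonneg hM k j i)))⟩

lemma col_nonzero {M : Matrix (Fin n) (Fin n) ℝ} (hM : ∀ i j, 0 ≤ M i j)
    (hirr : MatIrred M) (j : Fin n) : ∃ i, 0 < M i j := by
  obtain ⟨m, hm, hpos⟩ := hirr j j
  obtain ⟨k, rfl⟩ : ∃ k, m = k + 1 := ⟨m - 1, by omega⟩
  rw [pow_succ, Matrix.mul_apply] at hpos
  obtain ⟨i, hi⟩ := exists_pos_term (fun i => mul_nonneg (pow_entry_nonneg hM k j i) (hM i j)) hpos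
  exact ⟨i, (mul_pos_iff.mp hi).elim (fun h => h.2) (fun h => absurd h.2 (not_lt.mpr (hM i j)))⟩

lemma specRad_pos_of_irred (hn : 0 < n) {M : Matrix (Fin n) (Fin n) ℝ}
    (hM : ∀ i j, 0 ≤ M i j) (hirr : MatIrred M) : 0 < specRad M := by
  haveI : Nonempty (Fin n) := ⟨⟨0, hn⟩⟩
  rw [specRad_eq_lam hn hM]
  set x : Fin n → ℝ := fun _ => (n : ℝ)⁻¹ with hx
  have hxs : x ∈ stdSimplex ℝ (Fin n) := uniform_mem_simplex hn
  have hMx : ∀ i, 0 < M.mulVec x i := by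
    intro i
    obtain ⟨j0, hj0⟩ := row_nonzero hM hirr i
    have h1 : M i j0 * x j0 ≤ M.mulVec x i := by
      rw [mulVec_apply]
      exact Finset.single_le_sum (fun j _ => mul_nonneg (hM i j) (hxs.1 j)) (Finset.mem_univ j0)
    have : 0 < M i j0 * x j0 := mul_pos hj0 (by rw [hx]; positivity)
    linarith
  set c := Finset.univ.inf' Finset.univ_nonempty (fun i => M.mulVec x i) with hc
  have hcpos : 0 < c := by
    rw [hc, Finset.lt_inf'_iff]
    exact fun i _ => hMx i
  have hfeas : c ∈ lamSet M := by
    refine ⟨le_of_lt hcpos, x, hxs, fun i => ?_⟩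
    have h1 : c ≤ M.mulVec x i := Finset.inf'_le _ (Finset.mem_univ i)
    have h2 : x i ≤ 1 := simplex_coord_le_one hxs i
    have h3 : 0 ≤ x i := hxs.1 i
    nlinarith
  exact lt_of_lt_of_le hcpos (le_lam hM hfeas)

lemma pos_eigen_of_irred (hn : 0 < n) {M : Matrix (Fin n) (Fin n) ℝ}
    (hM : ∀ i j, 0 ≤ M i j) (hirr : MatIrred M) :
    ∃ v, (∀ i, 0 < v i) ∧ (∑ i, v i = 1) ∧ M.mulVec v = specRad M • v := by
  obtain ⟨-, v, hv, heig⟩ := specRad_eigen hn hM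
  set r := specRad M with hr
  have hr0 : 0 ≤ r := by
    rw [hr, specRad_eq_lam hn hM]; exact lam_nonneg hn hM
  choose f hf1 hf2 using fun p : Fin n × Fin n => hirr p.1 p.2
  set N := Finset.univ.sup f with hN
  set B := ∑ k ∈ Finset.range (N + 1), M ^ k with hB
  have hBapp : ∀ i j, B i j = ∑ k ∈ Finset.range (N + 1), (M ^ k) i j := by
    intro i j; rw [hB, Matrix.sum_apply]
  have hBnn : ∀ i j, 0 ≤ B i j := by
    intro i j; rw [hBapp]
    exact Finset.sum_nonneg fun k _ => pow_entry_nonneg hM k i j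
  have hBpos : ∀ i j, 0 < B i j := by
    intro i j
    have hmem' : f (i, j) ∈ Finset.range (N + 1) :=
      Finset.mem_range.mpr (Nat.lt_succ_of_le (Finset.le_sup (Finset.mem_univ (i, j))))
    have hle : (M ^ f (i, j)) i j ≤ B i j := by
      rw [hBapp]
      exact Finset.single_le_sum (fun k _ => pow_entry_nonneg hM k i j) hmem'
    exact lt_of_lt_of_le (hf2 (i, j)) hle
  have hpowv : ∀ k, (M ^ k).mulVec v = (r ^ k) • v := by
    intro k
    induction k with
    | zero => simp [Matrix.one_mulVec]
    | succ k ih =>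
      rw [pow_succ', ← Matrix.mulVec_mulVec, ih, Matrix.mulVec_smul, heig, smul_smul, ← pow_succ]
  have hBv : B.mulVec v = (∑ k ∈ Finset.range (N + 1), r ^ k) • v := by
    funext i
    rw [mulVec_apply]
    have h1 : ∀ j, B i j * v j = ∑ k ∈ Finset.range (N + 1), (M ^ k) i j * v j := by
      intro j; rw [hBapp, Finset.sum_mul]
    rw [Finset.sum_congr rfl fun j _ => h1 j, Finset.sum_comm]
    have h2 : ∀ k, ∑ j, (M ^ k) i j * v j = r ^ k * v i := by
      intro k
      have := congrFun (hpowv k) i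
      rw [mulVec_apply] at this
      simpa using this
    rw [Finset.sum_congr rfl fun k _ => h2 k]
    simp [Finset.sum_mul]
  have hcpos : (0:ℝ) < ∑ k ∈ Finset.range (N + 1), r ^ k := by
    have h1 : (1:ℝ) ≤ ∑ k ∈ Finset.range (N + 1), r ^ k := by
      have : (r:ℝ) ^ 0 ≤ ∑ k ∈ Finset.range (N + 1), r ^ k :=
        Finset.single_le_sum (fun k _ => pow_nonneg hr0 k) (Finset.mem_range.mpr (Nat.succ_pos N))
      simpa using this
    linarith
  have hvpos : ∀ i, 0 < v i := by
    intro i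
    obtain ⟨j0, hj0⟩ := simplex_exists_pos hv
    have h1 : B i j0 * v j0 ≤ B.mulVec v i := by
      rw [mulVec_apply]
      exact Finset.single_le_sum (fun j _ => mul_nonneg (hBnn i j) (hv.1 j)) (Finset.mem_univ j0)
    have h2 : 0 < B.mulVec v i := lt_of_lt_of_le (mul_pos (hBpos i j0) hj0) h1
    have h3 := congrFun hBv i
    rw [Pi.smul_apply, smul_eq_mul] at h3
    rw [h3] at h2
    exact (mul_pos_iff.mp h2).elim (fun h => h.2)
      (fun h => absurd h.1 (not_lt.mpr (le_of_lt hcpos)))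
  exact ⟨v, hvpos, hv.2, heig⟩

lemma matIrred_transpose {M : Matrix (Fin n) (Fin n) ℝ} (h : MatIrred M) : MatIrred Mᵀ := by
  intro i j
  obtain ⟨m, hm, hpos⟩ := h j i
  refine ⟨m, hm, ?_⟩
  rw [← Matrix.transpose_pow]
  exact hpos

lemma specRad_transpose (M : Matrix (Fin n) (Fin n) ℝ) : specRad Mᵀ = specRad M := by
  have hs : spectrum ℂ (Mᵀ.map Complex.ofReal) = spectrum ℂ (M.map Complex.ofReal) := by
    ext μ
    rw [spectrum.mem_iff, spectrum.mem_iff]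
    have heq : (algebraMap ℂ (Matrix (Fin n) (Fin n) ℂ)) μ - Mᵀ.map Complex.ofReal
        = ((algebraMap ℂ (Matrix (Fin n) (Fin n) ℂ)) μ - M.map Complex.ofReal)ᵀ := by
      rw [Matrix.transpose_sub, Matrix.transpose_map, Algebra.algebraMap_eq_smul_one,
        Matrix.transpose_smul, Matrix.transpose_one]
    rw [heq, Matrix.isUnit_iff_isUnit_det, Matrix.det_transpose, ← Matrix.isUnit_iff_isUnit_det]
  unfold specRad
  rw [hs]

lemma posEigen_eq_specRad (hn : 0 < n) {M : Matrix (Fin n) (Fin n) ℝ}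
    (hM : ∀ i j, 0 ≤ M i j) (hirr : MatIrred M) {w : Fin n → ℝ} {l : ℝ}
    (hw : ∀ i, 0 < w i) (heig : M.mulVec w = l • w) : l = specRad M := by
  haveI : Nonempty (Fin n) := ⟨⟨0, hn⟩⟩
  have hMT : ∀ i j, 0 ≤ Mᵀ i j := fun i j => hM j i
  obtain ⟨u, hu, -, huev⟩ := pos_eigen_of_irred hn hMT (matIrred_transpose hirr)
  have h1 : ∑ i, u i * M.mulVec w i = l * ∑ i, u i * w i := by
    rw [heig, Finset.mul_sum]
    apply Finset.sum_congr rfl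
    intro i _
    rw [Pi.smul_apply, smul_eq_mul]
    ring
  have h2 : ∑ i, u i * M.mulVec w i = specRad Mᵀ * ∑ i, u i * w i := by
    calc ∑ i, u i * M.mulVec w i = ∑ i, ∑ j, u i * (M i j * w j) := by
          apply Finset.sum_congr rfl
          intro i _
          rw [mulVec_apply, Finset.mul_sum]
      _ = ∑ j, ∑ i, u i * (M i j * w j) := Finset.sum_comm
      _ = ∑ j, (∑ i, Mᵀ j i * u i) * w j := by
          apply Finset.sum_congr rfl
          intro j _
          rw [Finset.sum_mul]
          apply Finset.sum_congr rfl
          intro i _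
          rw [Matrix.transpose_apply]
          ring
      _ = ∑ j, (specRad Mᵀ * u j) * w j := by
          apply Finset.sum_congr rfl
          intro j _
          have := congrFun huev j
          rw [mulVec_apply] at this
          rw [this, Pi.smul_apply, smul_eq_mul]
      _ = specRad Mᵀ * ∑ j, u j * w j := by
          rw [Finset.mul_sum]
          apply Finset.sum_congr rfl
          intro j _
          ring
  have h3 : 0 < ∑ i, u i * w i :=
    Finset.sum_pos (fun i _ => mul_pos (hu i) (hw i)) Finset.univ_nonempty
  have h4 : l * ∑ i, u i * w i = specRad Mᵀ * ∑ i, u i * w i := by rw [← h1, h2]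
  have := mul_right_cancel₀ (ne_of_gt h3) h4
  rw [this, specRad_transpose]

lemma young {x y t : ℝ} (hx : 0 ≤ x) (hy : 0 ≤ y) (ht : t ∈ Set.Ioo (0:ℝ) 1) :
    x ^ (1 - t) * y ^ t ≤ (1 - t) * x + t * y := by
  obtain ⟨ht0, ht1⟩ := ht
  rcases hx.eq_or_lt with hx0 | hxpos
  · rw [← hx0, Real.zero_rpow (by intro hc; exact absurd hc (by intro h; linarith) : (1:ℝ) - t ≠ 0), zero_mul]
    nlinarith
  rcases hy.eq_or_lt with hy0 | hypos
  · rw [← hy0, Real.zero_rpow (ne_of_gt ht0), mul_zero]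
    nlinarith
  have h1 : x ^ (1 - t) * y ^ t = Real.exp ((1 - t) * Real.log x + t * Real.log y) := by
    rw [Real.rpow_def_of_pos hxpos, Real.rpow_def_of_pos hypos, ← Real.exp_add]
    ring_nf
  rw [h1]
  have hc := convexOn_exp.2 (Set.mem_univ (Real.log x)) (Set.mem_univ (Real.log y))
    (by linarith : (0:ℝ) ≤ 1 - t) (le_of_lt ht0) (by ring)
  simp only [smul_eq_mul] at hc
  rw [Real.exp_log hxpos, Real.exp_log hypos] at hc
  exact hc

lemma young_eq {x y t : ℝ} (hx : 0 ≤ x) (hy : 0 ≤ y) (ht : t ∈ Set.Ioo (0:ℝ) 1)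
    (heq : x ^ (1 - t) * y ^ t = (1 - t) * x + t * y) : x = y := by
  obtain ⟨ht0, ht1⟩ := ht
  rcases hx.eq_or_lt with hx0 | hxpos
  · rw [← hx0] at heq ⊢
    rw [Real.zero_rpow (by intro hc; linarith [hc] : (1:ℝ) - t ≠ 0), zero_mul] at heq
    have : t * y = 0 := by linarith
    rcases mul_eq_zero.mp this with h | h
    · linarith
    · exact h.symm
  rcases hy.eq_or_lt with hy0 | hypos
  · rw [← hy0] at heq ⊢
    rw [Real.zero_rpow (ne_of_gt ht0), mul_zero] at heq
    have : (1 - t) * x = 0 := by linarith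
    rcases mul_eq_zero.mp this with h | h
    · linarith
    · exact h
  by_contra hne
  have hlog : Real.log x ≠ Real.log y := by
    intro hc
    exact hne (by rw [← Real.exp_log hxpos, hc, Real.exp_log hypos])
  have hs := strictConvexOn_exp.2 (Set.mem_univ (Real.log x)) (Set.mem_univ (Real.log y)) hlog
    (by linarith : (0:ℝ) < 1 - t) ht0 (by ring)
  simp only [smul_eq_mul] at hs
  rw [Real.exp_log hxpos, Real.exp_log hypos] at hs
  have h1 : x ^ (1 - t) * y ^ t = Real.exp ((1 - t) * Real.log x + t * Real.log y) := by
    rw [Real.rpow_def_of_pos hxpos, Real.rpow_def_of_pos hypos, ← Real.exp_add]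
    ring_nf
  rw [← h1] at hs
  linarith

lemma holder_sum {a b : Fin n → ℝ} (ha : ∀ j, 0 ≤ a j) (hb : ∀ j, 0 ≤ b j)
    {t : ℝ} (ht : t ∈ Set.Ioo (0:ℝ) 1) :
    ∑ j, a j ^ (1 - t) * b j ^ t ≤ (∑ j, a j) ^ (1 - t) * (∑ j, b j) ^ t := by
  obtain ⟨ht0, ht1⟩ := ht
  have ht' : t ∈ Set.Ioo (0:ℝ) 1 := ⟨ht0, ht1⟩
  set Sa := ∑ j, a j with hSa
  set Sb := ∑ j, b j with hSb
  rcases (Finset.sum_nonneg fun j _ => ha j).eq_or_lt with hSa0 | hSapos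
  · have hz : ∀ j, a j = 0 := fun j =>
      (Finset.sum_eq_zero_iff_of_nonneg (fun j _ => ha j)).mp hSa0.symm j (Finset.mem_univ j)
    have hL : ∑ j, a j ^ (1 - t) * b j ^ t = 0 := by
      apply Finset.sum_eq_zero
      intro j _
      rw [hz j, Real.zero_rpow (by linarith : (1:ℝ) - t ≠ 0), zero_mul]
    rw [hL]
    exact mul_nonneg (Real.rpow_nonneg (Finset.sum_nonneg fun j _ => ha j) _)
      (Real.rpow_nonneg (Finset.sum_nonneg fun j _ => hb j) _)
  rcases (Finset.sum_nonneg fun j _ => hb j).eq_or_lt with hSb0 | hSbpos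
  · have hz : ∀ j, b j = 0 := fun j =>
      (Finset.sum_eq_zero_iff_of_nonneg (fun j _ => hb j)).mp hSb0.symm j (Finset.mem_univ j)
    have hL : ∑ j, a j ^ (1 - t) * b j ^ t = 0 := by
      apply Finset.sum_eq_zero
      intro j _
      rw [hz j, Real.zero_rpow (ne_of_gt ht0), mul_zero]
    have hR : Sb = 0 := hSb0.symm
    rw [hL, hR, Real.zero_rpow (ne_of_gt ht0), mul_zero]
  have key : ∀ j, a j ^ (1 - t) * b j ^ t
      ≤ ((1 - t) * (a j / Sa) + t * (b j / Sb)) * (Sa ^ (1 - t) * Sb ^ t) := by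
    intro j
    have h1 : a j ^ (1 - t) * b j ^ t
        = (a j / Sa) ^ (1 - t) * (b j / Sb) ^ t * (Sa ^ (1 - t) * Sb ^ t) := by
      rw [Real.div_rpow (ha j) (le_of_lt hSapos), Real.div_rpow (hb j) (le_of_lt hSbpos)]
      have hSa' : (0:ℝ) < Sa ^ (1 - t) := Real.rpow_pos_of_pos hSapos _
      have hSb' : (0:ℝ) < Sb ^ t := Real.rpow_pos_of_pos hSbpos _
      field_simp
      rw [hSa, hSb]
    rw [h1]
    apply mul_le_mul_of_nonneg_right
    · exact young (div_nonneg (ha j) (le_of_lt hSapos)) (div_nonneg (hb j) (le_of_lt hSbpos)) ht'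
    · exact le_of_lt (mul_pos (Real.rpow_pos_of_pos hSapos _) (Real.rpow_pos_of_pos hSbpos _))
  calc ∑ j, a j ^ (1 - t) * b j ^ t
      ≤ ∑ j, ((1 - t) * (a j / Sa) + t * (b j / Sb)) * (Sa ^ (1 - t) * Sb ^ t) :=
        Finset.sum_le_sum fun j _ => key j
    _ = Sa ^ (1 - t) * Sb ^ t := by
        rw [← Finset.sum_mul]
        have hone : ∑ j, ((1 - t) * (a j / Sa) + t * (b j / Sb)) = 1 := by
          rw [Finset.sum_add_distrib]
          have e1 : ∑ j, (1 - t) * (a j / Sa) = (1 - t) := by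
            rw [← Finset.mul_sum, ← Finset.sum_div, ← hSa, div_self (ne_of_gt hSapos), mul_one]
          have e2 : ∑ j, t * (b j / Sb) = t := by
            rw [← Finset.mul_sum, ← Finset.sum_div, ← hSb, div_self (ne_of_gt hSbpos), mul_one]
          rw [e1, e2]
          ring
        rw [hone, one_mul]

lemma holder_sum_eq {a b : Fin n → ℝ} (ha : ∀ j, 0 ≤ a j) (hb : ∀ j, 0 ≤ b j)
    {t : ℝ} (ht : t ∈ Set.Ioo (0:ℝ) 1)
    (hSapos : 0 < ∑ j, a j) (hSbpos : 0 < ∑ j, b j)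
    (heq : ∑ j, a j ^ (1 - t) * b j ^ t = (∑ j, a j) ^ (1 - t) * (∑ j, b j) ^ t) :
    ∀ j, a j * (∑ k, b k) = b j * (∑ k, a k) := by
  obtain ⟨ht0, ht1⟩ := ht
  have ht' : t ∈ Set.Ioo (0:ℝ) 1 := ⟨ht0, ht1⟩
  set Sa := ∑ j, a j with hSa
  set Sb := ∑ j, b j with hSb
  set K := Sa ^ (1 - t) * Sb ^ t with hK
  have hKpos : 0 < K := mul_pos (Real.rpow_pos_of_pos hSapos _) (Real.rpow_pos_of_pos hSbpos _)
  have h1 : ∀ j, a j ^ (1 - t) * b j ^ t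
      = (a j / Sa) ^ (1 - t) * (b j / Sb) ^ t * K := by
    intro j
    rw [hK, Real.div_rpow (ha j) (le_of_lt hSapos), Real.div_rpow (hb j) (le_of_lt hSbpos)]
    have hSa' : (0:ℝ) < Sa ^ (1 - t) := Real.rpow_pos_of_pos hSapos _
    have hSb' : (0:ℝ) < Sb ^ t := Real.rpow_pos_of_pos hSbpos _
    field_simp
  set g : Fin n → ℝ := fun j => ((1 - t) * (a j / Sa) + t * (b j / Sb)) * K
    - a j ^ (1 - t) * b j ^ t with hg
  have hg0 : ∀ j, 0 ≤ g j := by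
    intro j
    rw [hg]
    simp only [sub_nonneg]
    rw [h1 j]
    apply mul_le_mul_of_nonneg_right
    · exact young (div_nonneg (ha j) (le_of_lt hSapos)) (div_nonneg (hb j) (le_of_lt hSbpos)) ht'
    · exact le_of_lt hKpos
  have hgsum : ∑ j, g j = 0 := by
    rw [hg]
    rw [Finset.sum_sub_distrib]
    rw [heq]
    rw [← Finset.sum_mul]
    have hone : ∑ j, ((1 - t) * (a j / Sa) + t * (b j / Sb)) = 1 := by
      rw [Finset.sum_add_distrib]
      have e1 : ∑ j, (1 - t) * (a j / Sa) = (1 - t) := by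
        rw [← Finset.mul_sum, ← Finset.sum_div, ← hSa, div_self (ne_of_gt hSapos), mul_one]
      have e2 : ∑ j, t * (b j / Sb) = t := by
        rw [← Finset.mul_sum, ← Finset.sum_div, ← hSb, div_self (ne_of_gt hSbpos), mul_one]
      rw [e1, e2]
      ring
    rw [hone, one_mul, hK]
    ring
  have hgz : ∀ j, g j = 0 := by
    intro j
    have := (Finset.sum_eq_zero_iff_of_nonneg (fun j _ => hg0 j)).mp hgsum j (Finset.mem_univ j)
    exact this
  intro j
  have h2 : (a j / Sa) ^ (1 - t) * (b j / Sb) ^ t = (1 - t) * (a j / Sa) + t * (b j / Sb) := by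
    have h3 := hgz j
    rw [hg] at h3
    have h4 : a j ^ (1 - t) * b j ^ t = ((1 - t) * (a j / Sa) + t * (b j / Sb)) * K := by
      linarith [h3]
    rw [h1 j] at h4
    exact mul_right_cancel₀ (ne_of_gt hKpos) h4
  have h5 : a j / Sa = b j / Sb := young_eq (div_nonneg (ha j) (le_of_lt hSapos))
    (div_nonneg (hb j) (le_of_lt hSbpos)) ht' h2
  have h6 := div_eq_div_iff (ne_of_gt hSapos) (ne_of_gt hSbpos) |>.mp h5
  linarith [h6]

lemma expDiag_mul_apply {d : Fin n → ℝ} {A : Matrix (Fin n) (Fin n) ℝ} {i j : Fin n} :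
    (expDiag d * A) i j = Real.exp (d i) * A i j := by
  rw [expDiag, Matrix.diagonal_mul]

lemma expDiag_mul_nonneg {d : Fin n → ℝ} {A : Matrix (Fin n) (Fin n) ℝ}
    (hA : ∀ i j, 0 ≤ A i j) : ∀ i j, 0 ≤ (expDiag d * A) i j := by
  intro i j
  rw [expDiag_mul_apply]
  exact mul_nonneg (le_of_lt (Real.exp_pos _)) (hA i j)

lemma matIrred_of_sameSupport {A B : Matrix (Fin n) (Fin n) ℝ}
    (hA : ∀ i j, 0 ≤ A i j) (hB : ∀ i j, 0 ≤ B i j)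
    (hsupp : ∀ i j, 0 < A i j → 0 < B i j) (hirr : MatIrred A) : MatIrred B := by
  have key : ∀ m i j, 0 < (A ^ m) i j → 0 < (B ^ m) i j := by
    intro m
    induction m with
    | zero => intro i j h; simpa using h
    | succ k ih =>
      intro i j h
      rw [pow_succ, Matrix.mul_apply] at h ⊢
      obtain ⟨l, hl⟩ := exists_pos_term
        (fun l => mul_nonneg (pow_entry_nonneg hA k i l) (hA l j)) h
      have h1 : 0 < (A ^ k) i l ∧ 0 < A l j := by
        rcases mul_pos_iff.mp hl with h' | h'
        · exact h'
        · exact absurd h'.2 (not_lt.mpr (hA l j))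
      have h2 : 0 < (B ^ k) i l * B l j := mul_pos (ih i l h1.1) (hsupp l j h1.2)
      have h3 : (B ^ k) i l * B l j ≤ ∑ l', (B ^ k) i l' * B l' j :=
        Finset.single_le_sum (fun l' _ =>
          mul_nonneg (pow_entry_nonneg hB k i l') (hB l' j)) (Finset.mem_univ l)
      linarith
  intro i j
  obtain ⟨m, hm, hpos⟩ := hirr i j
  exact ⟨m, hm, key m i j hpos⟩

lemma exp_rpow' (c s : ℝ) : Real.exp c ^ s = Real.exp (c * s) := by
  rw [Real.rpow_def_of_pos (Real.exp_pos c), Real.log_exp]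

lemma rpow_split {x t : ℝ} (hx : 0 ≤ x) (ht0 : 0 < t) (ht1 : t < 1) :
    x ^ (1 - t) * x ^ t = x := by
  rw [← Real.rpow_add' hx (by norm_num : (1 - t) + t ≠ 0)]
  norm_num

lemma left_pairing {M : Matrix (Fin n) (Fin n) ℝ} {u z : Fin n → ℝ} {r : ℝ}
    (hu : Mᵀ.mulVec u = r • u) :
    ∑ i, u i * M.mulVec z i = r * ∑ i, u i * z i := by
  calc ∑ i, u i * M.mulVec z i = ∑ i, ∑ j, u i * (M i j * z j) := by
        apply Finset.sum_congr rfl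
        intro i _
        rw [mulVec_apply, Finset.mul_sum]
    _ = ∑ j, ∑ i, u i * (M i j * z j) := Finset.sum_comm
    _ = ∑ j, (∑ i, Mᵀ j i * u i) * z j := by
        apply Finset.sum_congr rfl
        intro j _
        rw [Finset.sum_mul]
        apply Finset.sum_congr rfl
        intro i _
        rw [Matrix.transpose_apply]
        ring
    _ = ∑ j, (r * u j) * z j := by
        apply Finset.sum_congr rfl
        intro j _
        have := congrFun hu j
        rw [mulVec_apply] at this
        rw [this, Pi.smul_apply, smul_eq_mul]
    _ = r * ∑ j, u j * z j := by
        rw [Finset.mul_sum]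
        apply Finset.sum_congr rfl
        intro j _
        ring

lemma property1_of_irred (hn : 0 < n) {A : Matrix (Fin n) (Fin n) ℝ}
    (hA : ∀ i j, 0 ≤ A i j) (hirrA : MatIrred A) (hirrB : MatIrred (Aᵀ * A)) :
    ∀ C D : Fin n → ℝ, ∀ t ∈ Set.Ioo (0:ℝ) 1,
    Real.log (specRad (expDiag (fun i => (1 - t) * C i + t * D i) * A)) =
      (1 - t) * Real.log (specRad (expDiag C * A)) +
        t * Real.log (specRad (expDiag D * A)) →
    ∃ c : ℝ, ∀ i, C i - D i = c := by
  intro C D t ht hEq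
  obtain ⟨ht0, ht1⟩ := ht
  haveI : Nonempty (Fin n) := ⟨⟨0, hn⟩⟩
  set P := expDiag C * A with hP
  set Q := expDiag D * A with hQ
  set M := expDiag (fun i => (1 - t) * C i + t * D i) * A with hM
  have hPnn : ∀ i j, 0 ≤ P i j := expDiag_mul_nonneg hA
  have hQnn : ∀ i j, 0 ≤ Q i j := expDiag_mul_nonneg hA
  have hMnn : ∀ i j, 0 ≤ M i j := expDiag_mul_nonneg hA
  have hPirr : MatIrred P := matIrred_of_sameSupport hA hPnn
    (fun i j h => by rw [hP, expDiag_mul_apply]; exact mul_pos (Real.exp_pos _) h) hirrA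
  have hQirr : MatIrred Q := matIrred_of_sameSupport hA hQnn
    (fun i j h => by rw [hQ, expDiag_mul_apply]; exact mul_pos (Real.exp_pos _) h) hirrA
  have hMirr : MatIrred M := matIrred_of_sameSupport hA hMnn
    (fun i j h => by rw [hM, expDiag_mul_apply]; exact mul_pos (Real.exp_pos _) h) hirrA
  set rP := specRad P with hrP
  set rQ := specRad Q with hrQ
  set rM := specRad M with hrM
  have hrPpos : 0 < rP := specRad_pos_of_irred hn hPnn hPirr
  have hrQpos : 0 < rQ := specRad_pos_of_irred hn hQnn hQirr
  have hrMpos : 0 < rM := specRad_pos_of_irred hn hMnn hMirr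
  obtain ⟨vP, hvPpos, -, hvPeig⟩ := pos_eigen_of_irred hn hPnn hPirr
  obtain ⟨vQ, hvQpos, -, hvQeig⟩ := pos_eigen_of_irred hn hQnn hQirr
  have hMTnn : ∀ i j, 0 ≤ Mᵀ i j := fun i j => hMnn j i
  obtain ⟨u, hupos, -, hueig⟩ := pos_eigen_of_irred hn hMTnn (matIrred_transpose hMirr)
  rw [specRad_transpose] at hueig
  set R := rP ^ (1 - t) * rQ ^ t with hR
  have hRpos : 0 < R := mul_pos (Real.rpow_pos_of_pos hrPpos _) (Real.rpow_pos_of_pos hrQpos _)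
  have hrMR : rM = R := by
    have h1 : Real.log rM = Real.log R := by
      rw [hR, Real.log_mul (ne_of_gt (Real.rpow_pos_of_pos hrPpos _))
        (ne_of_gt (Real.rpow_pos_of_pos hrQpos _)), Real.log_rpow hrPpos, Real.log_rpow hrQpos]
      exact hEq
    calc rM = Real.exp (Real.log rM) := (Real.exp_log hrMpos).symm
    _ = Real.exp (Real.log R) := by rw [h1]
    _ = R := Real.exp_log hRpos
  set z : Fin n → ℝ := fun j => vP j ^ (1 - t) * vQ j ^ t with hz
  have hzpos : ∀ j, 0 < z j := fun j =>
    mul_pos (Real.rpow_pos_of_pos (hvPpos j) _) (Real.rpow_pos_of_pos (hvQpos j) _)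
  have hterm : ∀ i j, M i j * z j = (P i j * vP j) ^ (1 - t) * (Q i j * vQ j) ^ t := by
    intro i j
    rcases (hA i j).eq_or_lt with hAij | hAij
    · rw [hM, hP, hQ, expDiag_mul_apply, expDiag_mul_apply, expDiag_mul_apply, ← hAij]
      have hz1 : Real.exp (C i) * 0 * vP j = 0 := by ring
      have hz2 : Real.exp (D i) * 0 * vQ j = 0 := by ring
      rw [hz1, hz2, Real.zero_rpow (ne_of_gt (by linarith : (0:ℝ) < 1 - t)), zero_mul]
      ring
    · have e1 : M i j = Real.exp ((1 - t) * C i + t * D i) * A i j := by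
        rw [hM, expDiag_mul_apply]
      have e2 : P i j = Real.exp (C i) * A i j := by rw [hP, expDiag_mul_apply]
      have e3 : Q i j = Real.exp (D i) * A i j := by rw [hQ, expDiag_mul_apply]
      rw [e1, e2, e3]
      rw [Real.mul_rpow (by positivity) (le_of_lt (hvPpos j)),
        Real.mul_rpow (by positivity) (le_of_lt (hvQpos j)),
        Real.mul_rpow (le_of_lt (Real.exp_pos _)) (le_of_lt hAij),
        Real.mul_rpow (le_of_lt (Real.exp_pos _)) (le_of_lt hAij)]
      rw [exp_rpow', exp_rpow']
      have e4 : A i j ^ (1 - t) * A i j ^ t = A i j := rpow_split (le_of_lt hAij) ht0 ht1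
      calc Real.exp ((1 - t) * C i + t * D i) * A i j * z j
          = (Real.exp (C i * (1 - t)) * Real.exp (D i * t)) * (A i j ^ (1 - t) * A i j ^ t)
            * (vP j ^ (1 - t) * vQ j ^ t) := by
            rw [← Real.exp_add, e4, hz]
            ring_nf
      _ = Real.exp (C i * (1 - t)) * A i j ^ (1 - t) * vP j ^ (1 - t)
            * (Real.exp (D i * t) * A i j ^ t * vQ j ^ t) := by ring
  have hSarow : ∀ i, ∑ j, P i j * vP j = rP * vP i := by
    intro i
    have := congrFun hvPeig i
    rw [mulVec_apply, Pi.smul_apply, smul_eq_mul] at this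
    exact this
  have hSbrow : ∀ i, ∑ j, Q i j * vQ j = rQ * vQ i := by
    intro i
    have := congrFun hvQeig i
    rw [mulVec_apply, Pi.smul_apply, smul_eq_mul] at this
    exact this
  have hMzval : ∀ i, M.mulVec z i = ∑ j, (P i j * vP j) ^ (1 - t) * (Q i j * vQ j) ^ t := by
    intro i
    rw [mulVec_apply]
    exact Finset.sum_congr rfl fun j _ => hterm i j
  have hRz : ∀ i, (rP * vP i) ^ (1 - t) * (rQ * vQ i) ^ t = R * z i := by
    intro i
    rw [Real.mul_rpow (le_of_lt hrPpos) (le_of_lt (hvPpos i)),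
      Real.mul_rpow (le_of_lt hrQpos) (le_of_lt (hvQpos i)), hR, hz]
    ring
  have hrow_le : ∀ i, M.mulVec z i ≤ R * z i := by
    intro i
    rw [hMzval i, ← hRz i, ← hSarow i, ← hSbrow i]
    exact holder_sum (fun j => mul_nonneg (hPnn i j) (le_of_lt (hvPpos j)))
      (fun j => mul_nonneg (hQnn i j) (le_of_lt (hvQpos j))) ⟨ht0, ht1⟩
  have hpair : ∑ i, u i * M.mulVec z i = R * ∑ i, u i * z i := by
    rw [left_pairing hueig, ← hrM, hrMR]
  have hrow_eq : ∀ i, M.mulVec z i = R * z i := by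
    have hsum0 : ∑ i, u i * (R * z i - M.mulVec z i) = 0 := by
      have : ∑ i, u i * (R * z i - M.mulVec z i)
          = R * ∑ i, u i * z i - ∑ i, u i * M.mulVec z i := by
        rw [Finset.mul_sum, ← Finset.sum_sub_distrib]
        apply Finset.sum_congr rfl
        intro i _
        ring
      rw [this, hpair]
      ring
    have hnn : ∀ i, 0 ≤ u i * (R * z i - M.mulVec z i) := fun i =>
      mul_nonneg (le_of_lt (hupos i)) (sub_nonneg.mpr (hrow_le i))
    intro i
    have := (Finset.sum_eq_zero_iff_of_nonneg (fun i _ => hnn i)).mp hsum0 i (Finset.mem_univ i)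
    have h2 : R * z i - M.mulVec z i = 0 := by
      rcases mul_eq_zero.mp this with h | h
      · exact absurd h (ne_of_gt (hupos i))
      · exact h
    linarith
  have hcross : ∀ i j, P i j * vP j * (rQ * vQ i) = Q i j * vQ j * (rP * vP i) := by
    intro i j
    have heqrow : ∑ j, (P i j * vP j) ^ (1 - t) * (Q i j * vQ j) ^ t
        = (∑ j, P i j * vP j) ^ (1 - t) * (∑ j, Q i j * vQ j) ^ t := by
      rw [← hMzval i, hSarow i, hSbrow i, hRz i]
      exact hrow_eq i
    have := holder_sum_eq (fun j => mul_nonneg (hPnn i j) (le_of_lt (hvPpos j)))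
      (fun j => mul_nonneg (hQnn i j) (le_of_lt (hvQpos j))) ⟨ht0, ht1⟩
      (by rw [hSarow i]; exact mul_pos hrPpos (hvPpos i))
      (by rw [hSbrow i]; exact mul_pos hrQpos (hvQpos i)) heqrow j
    rw [hSarow i, hSbrow i] at this
    exact this
  -- cross-ratio equality along shared rows
  have hshare : ∀ i j k, 0 < A i j → 0 < A i k → vP j * vQ k = vP k * vQ j := by
    intro i j k hij hik
    have e2j : P i j = Real.exp (C i) * A i j := by rw [hP, expDiag_mul_apply]
    have e3j : Q i j = Real.exp (D i) * A i j := by rw [hQ, expDiag_mul_apply]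
    have e2k : P i k = Real.exp (C i) * A i k := by rw [hP, expDiag_mul_apply]
    have e3k : Q i k = Real.exp (D i) * A i k := by rw [hQ, expDiag_mul_apply]
    have h1 := hcross i j
    have h2 := hcross i k
    rw [e2j, e3j] at h1
    rw [e2k, e3k] at h2
    -- cancel A i j and A i k
    have h1' : Real.exp (C i) * vP j * (rQ * vQ i) = Real.exp (D i) * vQ j * (rP * vP i) := by
      apply mul_right_cancel₀ (ne_of_gt hij)
      linear_combination h1
    have h2' : Real.exp (C i) * vP k * (rQ * vQ i) = Real.exp (D i) * vQ k * (rP * vP i) := by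
      apply mul_right_cancel₀ (ne_of_gt hik)
      linear_combination h2
    have hXpos : 0 < Real.exp (C i) * (rQ * vQ i) :=
      mul_pos (Real.exp_pos _) (mul_pos hrQpos (hvQpos i))
    apply mul_right_cancel₀ (ne_of_gt hXpos)
    linear_combination vQ k * h1' - vQ j * h2'
  have hstep : ∀ j k, 0 < (Aᵀ * A) j k → vP j * vQ k = vP k * vQ j := by
    intro j k h
    rw [Matrix.mul_apply] at h
    obtain ⟨i, hi⟩ := exists_pos_term (f := fun i => Aᵀ j i * A i k)
      (fun i => mul_nonneg (hA i j) (hA i k)) h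
    rw [Matrix.transpose_apply] at hi
    rcases mul_pos_iff.mp hi with h' | h'
    · exact hshare i j k h'.1 h'.2
    · exact absurd h'.1 (not_lt.mpr (hA i j))
  have hBnn : ∀ j k, 0 ≤ (Aᵀ * A) j k := by
    intro j k
    rw [Matrix.mul_apply]
    exact Finset.sum_nonneg fun i _ => mul_nonneg (by rw [Matrix.transpose_apply]; exact hA i j) (hA i k)
  have hchain : ∀ m j k, 0 < ((Aᵀ * A) ^ m) j k → vP j * vQ k = vP k * vQ j := by
    intro m
    induction m with
    | zero =>
      intro j k h
      rcases eq_or_ne j k with rfl | hne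
      · ring
      · rw [pow_zero, Matrix.one_apply_ne hne] at h
        linarith
    | succ m ih =>
      intro j k h
      rw [pow_succ, Matrix.mul_apply] at h
      obtain ⟨l, hl⟩ := exists_pos_term
        (fun l => mul_nonneg (pow_entry_nonneg hBnn m j l) (hBnn l k)) h
      have h1 : 0 < ((Aᵀ * A) ^ m) j l ∧ 0 < (Aᵀ * A) l k := by
        rcases mul_pos_iff.mp hl with h' | h'
        · exact h'
        · exact absurd h'.2 (not_lt.mpr (hBnn l k))
      have e1 := ih j l h1.1
      have e2 := hstep l k h1.2
      have hlpos : 0 < vP l * vQ l := mul_pos (hvPpos l) (hvQpos l)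
      apply mul_right_cancel₀ (ne_of_gt hlpos)
      linear_combination vQ k * vP l * e1 + vQ j * vP l * e2
  have hF : ∀ j k, vP j * vQ k = vP k * vQ j := by
    intro j k
    obtain ⟨m, hm, hpos⟩ := hirrB j k
    exact hchain m j k hpos
  refine ⟨Real.log rP - Real.log rQ, fun i => ?_⟩
  obtain ⟨j, hj⟩ := row_nonzero hA hirrA i
  have e2j : P i j = Real.exp (C i) * A i j := by rw [hP, expDiag_mul_apply]
  have e3j : Q i j = Real.exp (D i) * A i j := by rw [hQ, expDiag_mul_apply]
  have h1 := hcross i j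
  rw [e2j, e3j] at h1
  have h1' : Real.exp (C i) * vP j * (rQ * vQ i) = Real.exp (D i) * vQ j * (rP * vP i) := by
    apply mul_right_cancel₀ (ne_of_gt hj)
    linear_combination h1
  have hFji := hF j i
  have hkey : Real.exp (C i) * rQ = Real.exp (D i) * rP := by
    have hcancel : 0 < vP i * vQ j := mul_pos (hvPpos i) (hvQpos j)
    apply mul_right_cancel₀ (ne_of_gt hcancel)
    linear_combination h1' - Real.exp (C i) * rQ * hFji
  have := congrArg Real.log hkey
  rw [Real.log_mul (ne_of_gt (Real.exp_pos _)) (ne_of_gt hrQpos),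
    Real.log_mul (ne_of_gt (Real.exp_pos _)) (ne_of_gt hrPpos),
    Real.log_exp, Real.log_exp] at this
  linarith

lemma exp_le_one_of_nonpos {x : ℝ} (h : x ≤ 0) : Real.exp x ≤ 1 := by
  calc Real.exp x ≤ Real.exp 0 := Real.exp_le_exp.mpr h
  _ = 1 := Real.exp_zero

lemma not_prop_of_closedSet {A : Matrix (Fin n) (Fin n) ℝ} (hn : 0 < n)
    (hA : ∀ i j, 0 ≤ A i j) (hr : 0 < specRad A)
    {T : Set (Fin n)} (hne : T.Nonempty) (hproper : ∃ j, j ∉ T)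
    (hclosed : ∀ k ∈ T, ∀ l, 0 < A k l → l ∈ T) : ¬ Property1 A := by
  classical
  intro hp
  set r := specRad A with hrdef
  obtain ⟨-, v, hv, hveig⟩ := specRad_eigen hn hA
  -- we produce w : Fin n → ℝ taking both values 0 and 1 with
  -- specRad (expDiag (s • w) * A) = r for all s ≤ 0
  have key : ∃ w : Fin n → ℝ, (∃ i, w i = 1) ∧ (∃ i, w i = 0) ∧
      ∀ s : ℝ, s ≤ 0 → specRad (expDiag (fun i => s * w i) * A) = r := by
    by_cases hvT : ∀ k ∈ T, v k = 0
    · -- case: v vanishes on T; use w = indicator of T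
      set w : Fin n → ℝ := fun i => if i ∈ T then 1 else 0 with hw
      refine ⟨w, ⟨hne.choose, by simp [hw, hne.choose_spec]⟩,
        ⟨hproper.choose, by simp [hw, hproper.choose_spec]⟩, ?_⟩
      intro s hs
      set Ms := expDiag (fun i => s * w i) * A with hMs
      have hMsnn : ∀ i j, 0 ≤ Ms i j := expDiag_mul_nonneg hA
      have hMsle : ∀ i j, Ms i j ≤ A i j := by
        intro i j
        rw [hMs, expDiag_mul_apply]
        have h1 : s * w i ≤ 0 := by
          rw [hw]
          by_cases hiT : i ∈ T <;> simp [hiT] <;> linarith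
        calc Real.exp (s * w i) * A i j ≤ 1 * A i j :=
              mul_le_mul_of_nonneg_right (exp_le_one_of_nonpos h1) (hA i j)
        _ = A i j := one_mul _
      have hup : specRad Ms ≤ r := specRad_mono hn hMsnn hMsle
      have heig2 : Ms.mulVec v = r • v := by
        funext i
        rw [mulVec_apply]
        have hterm : ∀ j, Ms i j * v j = Real.exp (s * w i) * (A i j * v j) := by
          intro j
          rw [hMs, expDiag_mul_apply]
          ring
        rw [Finset.sum_congr rfl fun j _ => hterm j, ← Finset.mul_sum]
        have hAv : ∑ j, A i j * v j = r * v i := by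
          have := congrFun hveig i
          rw [mulVec_apply, Pi.smul_apply, smul_eq_mul] at this
          exact this
        rw [hAv, Pi.smul_apply, smul_eq_mul]
        by_cases hiT : i ∈ T
        · rw [hvT i hiT]
          ring
        · rw [hw]
          simp [hiT]
      have hlow : r ≤ specRad Ms :=
        real_eigen_le_specRad hMsnn (simplex_ne_zero hv) heig2 (le_of_lt hr)
      linarith
    · -- case: v does not vanish on T; use w = indicator of Tᶜ
      push_neg at hvT
      obtain ⟨k0, hk0T, hk0⟩ := hvT
      have hk0pos : 0 < v k0 := lt_of_le_of_ne (hv.1 k0) (Ne.symm hk0)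
      set w : Fin n → ℝ := fun i => if i ∈ T then 0 else 1 with hw
      refine ⟨w, ⟨hproper.choose, by simp [hw, hproper.choose_spec]⟩,
        ⟨hne.choose, by simp [hw, hne.choose_spec]⟩, ?_⟩
      intro s hs
      set Ms := expDiag (fun i => s * w i) * A with hMs
      have hMsnn : ∀ i j, 0 ≤ Ms i j := expDiag_mul_nonneg hA
      have hMsle : ∀ i j, Ms i j ≤ A i j := by
        intro i j
        rw [hMs, expDiag_mul_apply]
        have h1 : s * w i ≤ 0 := by
          rw [hw]
          by_cases hiT : i ∈ T <;> simp [hiT] <;> linarith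
        calc Real.exp (s * w i) * A i j ≤ 1 * A i j :=
              mul_le_mul_of_nonneg_right (exp_le_one_of_nonpos h1) (hA i j)
        _ = A i j := one_mul _
      have hup : specRad Ms ≤ r := specRad_mono hn hMsnn hMsle
      -- truncated matrix A'' (rows outside T zeroed) and vector v'
      set A2 : Matrix (Fin n) (Fin n) ℝ := Matrix.of fun i j => if i ∈ T then A i j else 0
        with hA2
      set v2 : Fin n → ℝ := fun j => if j ∈ T then v j else 0 with hv2
      have hA2nn : ∀ i j, 0 ≤ A2 i j := by
        intro i j
        rw [hA2]
        by_cases hiT : i ∈ T <;> simp [hiT, hA i j]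
      have hA2le : ∀ i j, A2 i j ≤ Ms i j := by
        intro i j
        rw [hA2, hMs, expDiag_mul_apply, hw]
        by_cases hiT : i ∈ T
        · simp [hiT]
        · simp only [Matrix.of_apply, if_neg hiT]
          exact mul_nonneg (le_of_lt (Real.exp_pos _)) (hA i j)
      have heig2 : A2.mulVec v2 = r • v2 := by
        funext i
        rw [mulVec_apply, Pi.smul_apply, smul_eq_mul]
        by_cases hiT : i ∈ T
        · have hterm : ∀ j, A2 i j * v2 j = A i j * v j := by
            intro j
            rw [hA2, hv2]
            by_cases hjT : j ∈ T
            · simp [hiT, hjT]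
            · have hAij : A i j = 0 := by
                by_contra hc
                exact hjT (hclosed i hiT j (lt_of_le_of_ne (hA i j) (Ne.symm hc)))
              simp [hiT, hjT, hAij]
          rw [Finset.sum_congr rfl fun j _ => hterm j]
          have hAv : ∑ j, A i j * v j = r * v i := by
            have := congrFun hveig i
            rw [mulVec_apply, Pi.smul_apply, smul_eq_mul] at this
            exact this
          rw [hAv, hv2]
          simp [hiT]
        · have hterm : ∀ j, A2 i j * v2 j = 0 := by
            intro j
            rw [hA2]
            simp [hiT]
          rw [Finset.sum_congr rfl fun j _ => hterm j, hv2]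
          simp [hiT]
      have hv2ne : v2 ≠ 0 := by
        intro hc
        have := congrFun hc k0
        rw [hv2] at this
        simp [hk0T] at this
        exact hk0 this
      have hlow0 : r ≤ specRad A2 :=
        real_eigen_le_specRad hA2nn hv2ne heig2 (le_of_lt hr)
      have hlow : specRad A2 ≤ specRad Ms := specRad_mono hn hA2nn hA2le
      linarith
  obtain ⟨w, ⟨i1, hi1⟩, ⟨i2, hi2⟩, hspec⟩ := key
  -- apply Property1 with C = -w, D = -2w, t = 1/2
  have h12 : (1/2 : ℝ) ∈ Set.Ioo (0:ℝ) 1 := by norm_num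
  have hEq : Real.log (specRad (expDiag
        (fun i => (1 - 1/2) * ((-1 : ℝ) * w i) + (1/2 : ℝ) * ((-2 : ℝ) * w i)) * A)) =
      (1 - 1/2) * Real.log (specRad (expDiag (fun i => (-1 : ℝ) * w i) * A)) +
        (1/2 : ℝ) * Real.log (specRad (expDiag (fun i => (-2 : ℝ) * w i) * A)) := by
    have e1 : (fun i => (1 - 1/2) * ((-1 : ℝ) * w i) + (1/2 : ℝ) * ((-2 : ℝ) * w i))
        = fun i => (-(3/2) : ℝ) * w i := by
      funext i; ring
    rw [e1, hspec (-(3/2)) (by norm_num), hspec (-1) (by norm_num), hspec (-2) (by norm_num)]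
    ring
  obtain ⟨c, hc⟩ := hp (fun i => (-1 : ℝ) * w i) (fun i => (-2 : ℝ) * w i) (1/2) h12 hEq
  have hc1 := hc i1
  have hc2 := hc i2
  rw [hi1] at hc1
  rw [hi2] at hc2
  norm_num at hc1 hc2
  rw [← hc1] at hc2
  norm_num at hc2

lemma matIrred_of_property1 {A : Matrix (Fin n) (Fin n) ℝ} (hn : 0 < n)
    (hA : ∀ i j, 0 ≤ A i j) (hr : 0 < specRad A) (hp : Property1 A) : MatIrred A := by
  classical
  by_contra hcon
  rw [MatIrred] at hcon
  push_neg at hcon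
  obtain ⟨i0, j0, hij⟩ := hcon
  set S : Set (Fin n) := {k | ∃ m, 0 < m ∧ 0 < (A ^ m) i0 k} with hS
  have hj0 : j0 ∉ S := by
    rintro ⟨m, hm, hpos⟩
    exact absurd hpos (not_lt.mpr (hij m hm))
  have hclosedS : ∀ k ∈ S, ∀ l, 0 < A k l → l ∈ S := by
    rintro k ⟨m, hm, hpos⟩ l hAkl
    refine ⟨m + 1, by omega, ?_⟩
    rw [pow_succ, Matrix.mul_apply]
    have h1 : (A ^ m) i0 k * A k l ≤ ∑ k', (A ^ m) i0 k' * A k' l :=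
      Finset.single_le_sum (fun k' _ => mul_nonneg (pow_entry_nonneg hA m i0 k') (hA k' l))
        (Finset.mem_univ k)
    nlinarith [mul_pos hpos hAkl]
  by_cases hSne : S.Nonempty
  · exact not_prop_of_closedSet hn hA hr hSne ⟨j0, hj0⟩ hclosedS hp
  · rw [Set.not_nonempty_iff_eq_empty] at hSne
    have hrow0 : ∀ l, A i0 l = 0 := by
      intro l
      by_contra hc
      have hpos : 0 < A i0 l := lt_of_le_of_ne (hA i0 l) (Ne.symm hc)
      have hmem : l ∈ S := ⟨1, one_pos, by rwa [pow_one]⟩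
      rw [hSne] at hmem
      exact hmem
    by_cases hn1 : ∃ j : Fin n, j ≠ i0
    · refine not_prop_of_closedSet hn hA hr (T := {i0}) (Set.singleton_nonempty i0)
        ⟨hn1.choose, by simp [hn1.choose_spec]⟩ ?_ hp
      rintro k hk l hkl
      rw [Set.mem_singleton_iff] at hk
      subst hk
      rw [hrow0 l] at hkl
      exact absurd hkl (lt_irrefl 0)
    · push_neg at hn1
      have hA0 : ∀ i j, A i j = 0 := by
        intro i j
        rw [hn1 i]
        exact hrow0 j
      have hle : lam A ≤ 0 := by
        apply csSup_le (lamSet_nonempty hn hA)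
        intro l hl
        have hb := lamSet_le_bound hA hl
        have hsum : (∑ i, ∑ j, A i j) = 0 := by
          apply Finset.sum_eq_zero
          intro i _
          apply Finset.sum_eq_zero
          intro j _
          exact hA0 i j
        rw [hsum, mul_zero] at hb
        exact hb
      rw [specRad_eq_lam hn hA] at hr
      linarith

lemma matIrredB_of_property1 {A : Matrix (Fin n) (Fin n) ℝ} (hn : 0 < n)
    (hA : ∀ i j, 0 ≤ A i j) (hr : 0 < specRad A) (hirrA : MatIrred A)
    (hp : Property1 A) : MatIrred (Aᵀ * A) := by
  classical
  by_contra hcon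
  rw [MatIrred] at hcon
  push_neg at hcon
  obtain ⟨j0, k0, hjk⟩ := hcon
  set B := Aᵀ * A with hB
  have hBnn : ∀ j k, 0 ≤ B j k := by
    intro j k
    rw [hB, Matrix.mul_apply]
    exact Finset.sum_nonneg fun i _ =>
      mul_nonneg (by rw [Matrix.transpose_apply]; exact hA i j) (hA i k)
  have hBapp : ∀ j k, B j k = ∑ i, A i j * A i k := by
    intro j k
    rw [hB, Matrix.mul_apply]
    exact Finset.sum_congr rfl fun i _ => by rw [Matrix.transpose_apply]
  set S : Set (Fin n) := {k | ∃ m, 0 < m ∧ 0 < (B ^ m) j0 k} with hS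
  have hk0 : k0 ∉ S := by
    rintro ⟨m, hm, hpos⟩
    exact absurd hpos (not_lt.mpr (hjk m hm))
  have hj0S : j0 ∈ S := by
    obtain ⟨i, hi⟩ := col_nonzero hA hirrA j0
    refine ⟨1, one_pos, ?_⟩
    rw [pow_one, hBapp]
    have h1 : A i j0 * A i j0 ≤ ∑ i', A i' j0 * A i' j0 :=
      Finset.single_le_sum (fun i' _ => mul_nonneg (hA i' j0) (hA i' j0)) (Finset.mem_univ i)
    nlinarith [mul_pos hi hi]
  have hclosedS : ∀ k ∈ S, ∀ l, 0 < B k l → l ∈ S := by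
    rintro k ⟨m, hm, hpos⟩ l hBkl
    refine ⟨m + 1, by omega, ?_⟩
    rw [pow_succ, Matrix.mul_apply]
    have h1 : (B ^ m) j0 k * B k l ≤ ∑ k', (B ^ m) j0 k' * B k' l :=
      Finset.single_le_sum (fun k' _ => mul_nonneg (pow_entry_nonneg hBnn m j0 k') (hBnn k' l))
        (Finset.mem_univ k)
    nlinarith [mul_pos hpos hBkl]
  have hsep : ∀ j ∈ S, ∀ k, k ∉ S → ∀ i, A i j * A i k = 0 := by
    intro j hj k hk i
    have hBjk : B j k = 0 := by
      by_contra hc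
      exact hk (hclosedS j hj k (lt_of_le_of_ne (hBnn j k) (Ne.symm hc)))
    rw [hBapp] at hBjk
    exact (Finset.sum_eq_zero_iff_of_nonneg
      (fun i' _ => mul_nonneg (hA i' j) (hA i' k))).mp hBjk i (Finset.mem_univ i)
  set σ : Fin n → Prop := fun i => ∃ j ∈ S, 0 < A i j with hσ
  have hrowS : ∀ i, σ i → ∀ k, 0 < A i k → k ∈ S := by
    rintro i ⟨j, hjS, hij⟩ k hik
    by_contra hkS
    have := hsep j hjS k hkS i
    nlinarith [mul_pos hij hik]
  set F : Fin n → ℝ := fun i => if i ∈ S then 1 else 0 with hF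
  set G : Fin n → ℝ := fun i => F i - (if σ i then 1 else 0) with hG
  have hGedge : ∀ i j, 0 < A i j → G i = F i - F j := by
    intro i j hij
    rw [hG, hF]
    by_cases hσi : σ i
    · have hjS : j ∈ S := hrowS i hσi j hij
      simp [hσi, hjS]
    · have hjS : j ∉ S := fun hc => hσi ⟨j, hc, hij⟩
      simp [hσi, hjS]
  obtain ⟨v, hvpos, -, hveig⟩ := pos_eigen_of_irred hn hA hirrA
  set r := specRad A with hrdef
  have hspec : ∀ s : ℝ, specRad (expDiag (fun i => s * G i) * A) = r := by
    intro s
    set Ms := expDiag (fun i => s * G i) * A with hMs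
    have hMsnn : ∀ i j, 0 ≤ Ms i j := expDiag_mul_nonneg hA
    have hMsirr : MatIrred Ms := matIrred_of_sameSupport hA hMsnn
      (fun i j h => by rw [hMs, expDiag_mul_apply]; exact mul_pos (Real.exp_pos _) h) hirrA
    set w : Fin n → ℝ := fun i => Real.exp (s * F i) * v i with hw
    have hwpos : ∀ i, 0 < w i := fun i => mul_pos (Real.exp_pos _) (hvpos i)
    have hMw : Ms.mulVec w = r • w := by
      funext i
      rw [mulVec_apply, Pi.smul_apply, smul_eq_mul]
      have hterm : ∀ j, Ms i j * w j = Real.exp (s * F i) * (A i j * v j) := by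
        intro j
        rw [hMs, expDiag_mul_apply, hw]
        rcases (hA i j).eq_or_lt with hAij | hAij
        · rw [← hAij]
          ring
        · have hGij := hGedge i j hAij
          rw [hGij]
          rw [show s * (F i - F j) = s * F i - s * F j by ring, Real.exp_sub]
          have hne : Real.exp (s * F j) ≠ 0 := ne_of_gt (Real.exp_pos _)
          field_simp
      rw [Finset.sum_congr rfl fun j _ => hterm j, ← Finset.mul_sum]
      have hAv : ∑ j, A i j * v j = r * v i := by
        have := congrFun hveig i
        rw [mulVec_apply, Pi.smul_apply, smul_eq_mul] at this
        exact this
      rw [hAv, hw]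
      ring
    exact (posEigen_eq_specRad hn hMsnn hMsirr hwpos hMw).symm
  have h12 : (1/2 : ℝ) ∈ Set.Ioo (0:ℝ) 1 := by norm_num
  have hEq : Real.log (specRad (expDiag
        (fun i => (1 - 1/2) * G i + (1/2 : ℝ) * (0 : ℝ)) * A)) =
      (1 - 1/2) * Real.log (specRad (expDiag G * A)) +
        (1/2 : ℝ) * Real.log (specRad (expDiag (fun _ => (0:ℝ)) * A)) := by
    have e1 : (fun i => (1 - 1/2) * G i + (1/2 : ℝ) * (0 : ℝ))
        = fun i => (1/2 : ℝ) * G i := by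
      funext i; ring
    have e2 : G = fun i => (1 : ℝ) * G i := by funext i; ring
    have e3 : (fun _ : Fin n => (0:ℝ)) = fun i => (0 : ℝ) * G i := by funext i; ring
    rw [e1, hspec (1/2)]
    nth_rewrite 1 [e2]
    nth_rewrite 1 [e3]
    rw [hspec 1, hspec 0]
    ring
  obtain ⟨c, hc⟩ := hp G (fun _ => (0:ℝ)) (1/2) h12 hEq
  have hGc : ∀ i, G i = c := by
    intro i
    have := hc i
    simpa using this
  -- find rows hitting S and missing S
  obtain ⟨i1, hi1⟩ := col_nonzero hA hirrA j0
  obtain ⟨i2, hi2⟩ := col_nonzero hA hirrA k0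
  have hσ1 : σ i1 := ⟨j0, hj0S, hi1⟩
  have hσ2 : ¬ σ i2 := by
    intro hσi
    exact hk0 (hrowS i2 hσi k0 hi2)
  have hG1 : G i1 = F i1 - 1 := by rw [hG]; simp [hσ1]
  have hG2 : G i2 = F i2 := by rw [hG]; simp [hσ2]
  have hF1 : F i1 = 1 ∨ F i1 = 0 := by
    rw [hF]; by_cases h : i1 ∈ S <;> simp [h]
  have hF2 : F i2 = 1 ∨ F i2 = 0 := by
    rw [hF]; by_cases h : i2 ∈ S <;> simp [h]
  have hc0 : c = 0 := by
    have e1 := hGc i1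
    have e2 := hGc i2
    rw [hG1] at e1
    rw [hG2] at e2
    rcases hF1 with h1 | h1 <;> rcases hF2 with h2 | h2 <;>
      rw [h1] at e1 <;> rw [h2] at e2 <;> linarith
  -- so G ≡ 0, meaning i ∈ S ↔ σ i; then rows outside S never reach S
  have hiffS : ∀ i, i ∉ S → ¬ σ i := by
    intro i hiS hσi
    have := hGc i
    rw [hc0, hG, hF] at this
    simp [hiS, hσi] at this
  have hchain0 : ∀ m, ∀ i, i ∉ S → ∀ j, j ∈ S → (A ^ m) i j = 0 := by
    intro m
    induction m with
    | zero =>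
      intro i hiS j hjS
      have hne : i ≠ j := fun hc => hiS (hc ▸ hjS)
      rw [pow_zero, Matrix.one_apply_ne hne]
    | succ m ih =>
      intro i hiS j hjS
      rw [pow_succ', Matrix.mul_apply]
      apply Finset.sum_eq_zero
      intro l _
      rcases (hA i l).eq_or_lt with hAil | hAil
      · rw [← hAil, zero_mul]
      · have hlS : l ∉ S := by
          intro hlS
          exact hiffS i hiS ⟨l, hlS, hAil⟩
        rw [ih l hlS j hjS, mul_zero]
  obtain ⟨m, hm, hpos⟩ := hirrA k0 j0
  rw [hchain0 m k0 hk0 j0 hj0S] at hpos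
  exact absurd hpos (lt_irrefl 0)

end PFAux

open PFAux in
theorem stmt7 {n : ℕ} (A : Matrix (Fin n) (Fin n) ℝ)
    (hA : ∀ i j, 0 ≤ A i j) (hr : 0 < specRad A) :
    Property1 A ↔ (MatIrred A ∧ MatIrred (Aᵀ * A)) := by
  have hn : 0 < n := by
    by_contra h
    push_neg at h
    have hn0 : n = 0 := by omega
    subst hn0
    haveI : Subsingleton (Matrix (Fin 0) (Fin 0) ℂ) :=
      ⟨fun a b => by ext i; exact i.elim0⟩
    have hempty : {x : ℝ | ∃ μ ∈ spectrum ℂ (A.map Complex.ofReal), x = ‖μ‖} = ∅ := by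
      ext x
      simp only [Set.mem_setOf_eq, Set.mem_empty_iff_false, iff_false]
      rintro ⟨μ, hμ, rfl⟩
      rw [spectrum.mem_iff] at hμ
      exact hμ (isUnit_of_subsingleton _)
    rw [specRad, hempty, Real.sSup_empty] at hr
    exact lt_irrefl 0 hr
  constructor
  · intro hp
    have h1 : MatIrred A := matIrred_of_property1 hn hA hr hp
    exact ⟨h1, matIrredB_of_property1 hn hA hr h1 hp⟩
  · rintro ⟨h1, h2⟩
    exact property1_of_irred hn hA h1 h2
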